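/- Let X be a graph as in the context, fix a vertex x₀, and let m be an integer greater than 2. Then N_m(x₀) = c_m(x₀) − (deg(x₀)−2)·Σ_{i=1}^{⌈m/2⌉−1} c_{m−2i}(x₀) + Σ_{i=1}^{⌈m/2⌉−1} i·(Δ_X c_{m−2i})(x₀), where ⌈·⌉ denotes the ceiling function. -/
import Mathlib


/-- A graph in the sense of Serre: an edge set with origin/terminus maps and a
fixed-point-free involution `bar` satisfying `o e = t (bar e)`.
Loops and multiple edges are allowed. -/
structure SerreGraph where
  V : Type
  E : Type
  o : E → V
  t : E → V
  bar : E → E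
  bar_ne : ∀ e, bar e ≠ e
  bar_bar : ∀ e, bar (bar e) = e
  o_bar : ∀ e, o e = t (bar e)

namespace SerreGraph

variable (X : SerreGraph)

/-- The set of edges emanating from `x`. -/
def edgesAt (x : X.V) : Set X.E := {e | X.o e = x}

/-- The degree of a vertex. -/
noncomputable def deg (x : X.V) : ℕ := Nat.card (X.edgesAt x)

/-- A sequence of `m` edges is a path when consecutive edges are composable. -/
def IsPath {m : ℕ} (p : Fin m → X.E) : Prop :=
  ∀ (i : ℕ) (h : i + 1 < m), X.t (p ⟨i, by omega⟩) = X.o (p ⟨i + 1, h⟩)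

/-- No backtracking: no edge is followed by its reversal. -/
def NoBacktrack {m : ℕ} (p : Fin m → X.E) : Prop :=
  ∀ (i : ℕ) (h : i + 1 < m), p ⟨i + 1, h⟩ ≠ X.bar (p ⟨i, by omega⟩)

/-- A geodesic loop at `x`: a closed path starting and ending at `x` with no
backtracking. -/
def IsGeodesicLoopAt {m : ℕ} (x : X.V) (p : Fin m → X.E) : Prop :=
  X.IsPath p ∧ X.NoBacktrack p ∧
    ∀ (h : 0 < m), X.o (p ⟨0, h⟩) = x ∧ X.t (p ⟨m - 1, by omega⟩) = x

/-- A path has a tail when its last edge is the reversal of its first edge. -/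
def HasTail {m : ℕ} (p : Fin m → X.E) : Prop :=
  ∃ (h : 0 < m), p ⟨m - 1, by omega⟩ = X.bar (p ⟨0, h⟩)

/-- `c m x` is the number of geodesic loops of length `m` starting at `x`. -/
noncomputable def c (m : ℕ) (x : X.V) : ℕ :=
  Nat.card {p : Fin m → X.E // X.IsGeodesicLoopAt x p}

/-- `N m x` is the number of closed geodesics of length `m` starting at `x`,
i.e. geodesic loops with no tail. -/
noncomputable def N (m : ℕ) (x : X.V) : ℕ :=
  Nat.card {p : Fin m → X.E // X.IsGeodesicLoopAt x p ∧ ¬ X.HasTail p}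

/-- The formal combinatorial Laplacian applied to a function on vertices:
`(Δ f)(x) = deg(x)·f(x) − Σ_{e ∈ E_x} f(t(e))`. -/
noncomputable def lap (f : X.V → ℤ) (x : X.V) : ℤ :=
  (X.deg x : ℤ) * f x - ∑ᶠ e ∈ X.edgesAt x, f (X.t e)

/-- Connectedness: any two vertices are joined by a path. -/
def Connected : Prop :=
  ∀ x y : X.V, x = y ∨ ∃ (m : ℕ) (p : Fin m → X.E) (h : 0 < m),
    X.IsPath p ∧ X.o (p ⟨0, h⟩) = x ∧ X.t (p ⟨m - 1, by omega⟩) = y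

end SerreGraph

open Classical SerreGraph

-- ## generic helpers

lemma congrFin {α : Type*} {m : ℕ} (p : Fin m → α) {a b : ℕ} (ha : a < m) (hb : b < m)
    (h : a = b) : p ⟨a, ha⟩ = p ⟨b, hb⟩ := by subst h; rfl

lemma card_split {α : Type} (R S : α → Prop) [Finite {x // R x}] :
    Nat.card {x // R x} = Nat.card {x : α // R x ∧ S x} + Nat.card {x : α // R x ∧ ¬ S x} := by
  classical
  have e1 : {y : {x // R x} // S y.1} ≃ {x : α // R x ∧ S x} :=
    Equiv.subtypeSubtypeEquivSubtypeInter R S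
  have e2 : {y : {x // R x} // ¬ S y.1} ≃ {x : α // R x ∧ ¬ S x} :=
    Equiv.subtypeSubtypeEquivSubtypeInter R (fun x => ¬ S x)
  have e3 : {y : {x // R x} // S y.1} ⊕ {y : {x // R x} // ¬ S y.1} ≃ {x // R x} :=
    Equiv.sumCompl _
  rw [← Nat.card_congr e3, Nat.card_sum, Nat.card_congr e1, Nat.card_congr e2]

lemma card_sigma' {ι : Type} [Finite ι] (S : ι → Type) [∀ i, Finite (S i)] :
    Nat.card (Σ i, S i) = ∑ᶠ i : ι, Nat.card (S i) := by
  classical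
  haveI : Fintype ι := Fintype.ofFinite ι
  haveI : ∀ i, Fintype (S i) := fun i => Fintype.ofFinite _
  rw [Nat.card_eq_fintype_card, Fintype.card_sigma, finsum_eq_sum_of_fintype]
  simp [Nat.card_eq_fintype_card]

-- ## finiteness

variable {X : SerreGraph}

lemma finite_paths (hfin : ∀ x : X.V, (X.edgesAt x).Finite) :
    ∀ (m : ℕ) (x : X.V),
      Finite {p : Fin m → X.E // X.IsPath p ∧ ∀ h : 0 < m, X.o (p ⟨0, h⟩) = x} := by
  intro m
  induction m with
  | zero =>
    intro x
    haveI : Subsingleton (Fin 0 → X.E) :=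
      ⟨fun a b => funext fun i => absurd i.2 (by omega)⟩
    exact Finite.of_subsingleton
  | succ m ih =>
    intro x
    haveI : Finite ↥(X.edgesAt x) := (hfin x).to_subtype
    haveI : ∀ e : ↥(X.edgesAt x), Finite
        {q : Fin m → X.E // X.IsPath q ∧ ∀ h : 0 < m, X.o (q ⟨0, h⟩) = X.t e.1} :=
      fun e => ih (X.t e.1)
    set F : {p : Fin (m+1) → X.E // X.IsPath p ∧ ∀ h : 0 < m + 1, X.o (p ⟨0, h⟩) = x} →
        Σ e : ↥(X.edgesAt x),
          {q : Fin m → X.E // X.IsPath q ∧ ∀ h : 0 < m, X.o (q ⟨0, h⟩) = X.t e.1} :=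
      fun p => ⟨⟨p.1 ⟨0, by omega⟩, p.2.2 (by omega)⟩,
        ⟨fun i => p.1 ⟨i.1 + 1, by omega⟩,
          ⟨fun i h => by
            have := p.2.1 (i+1) (by omega)
            simpa using this,
          fun h => (p.2.1 0 (by omega)).symm⟩⟩⟩ with hF
    set G : (Σ e : ↥(X.edgesAt x),
          {q : Fin m → X.E // X.IsPath q ∧ ∀ h : 0 < m, X.o (q ⟨0, h⟩) = X.t e.1}) →
        (Fin (m+1) → X.E) :=
      fun s j => if h : j.1 = 0 then s.1.1 else s.2.1 ⟨j.1 - 1, by omega⟩ with hG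
    have hGF : ∀ p, G (F p) = p.1 := by
      intro p
      funext j
      by_cases h0 : j.1 = 0
      · simp only [hG, hF, h0, dif_pos]
        exact congrFin p.1 _ j.2 h0.symm
      · simp only [hG, hF, h0, dif_neg, not_false_iff]
        refine (congrFin p.1 _ j.2 ?_)
        omega
    have hinj : Function.Injective F := by
      intro a b h
      exact Subtype.ext ((hGF a).symm.trans (by rw [h, hGF]))
    exact Finite.of_injective F hinj

lemma finite_pred (hfin : ∀ x : X.V, (X.edgesAt x).Finite) (m : ℕ) (x : X.V)
    (P : (Fin m → X.E) → Prop)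
    (hP : ∀ p, P p → X.IsPath p ∧ ∀ h : 0 < m, X.o (p ⟨0, h⟩) = x) :
    Finite {p : Fin m → X.E // P p} := by
  haveI := finite_paths hfin m x
  exact Finite.of_injective
    (fun p => (⟨p.1, hP p.1 p.2⟩ :
      {p : Fin m → X.E // X.IsPath p ∧ ∀ h : 0 < m, X.o (p ⟨0, h⟩) = x}))
    (by intro a b h; apply Subtype.ext; exact congrArg (fun s => s.1) h)

lemma finite_GL (hfin : ∀ x : X.V, (X.edgesAt x).Finite) (m : ℕ) (x : X.V)
    (Q : (Fin m → X.E) → Prop) :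
    Finite {p : Fin m → X.E // X.IsGeodesicLoopAt x p ∧ Q p} :=
  finite_pred hfin m x _ (fun p hp => ⟨hp.1.1, fun h => (hp.1.2.2 h).1⟩)

lemma finite_GL' (hfin : ∀ x : X.V, (X.edgesAt x).Finite) (m : ℕ) (x : X.V) :
    Finite {p : Fin m → X.E // X.IsGeodesicLoopAt x p} :=
  finite_pred hfin m x _ (fun p hp => ⟨hp.1, fun h => (hp.2.2 h).1⟩)

-- ## edge basics

lemma bar_inj : Function.Injective X.bar := fun a b h => by
  rw [← X.bar_bar a, h, X.bar_bar]

lemma o_bar' (e : X.E) : X.o (X.bar e) = X.t e := by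
  rw [X.o_bar (X.bar e), X.bar_bar]

lemma t_bar (e : X.E) : X.t (X.bar e) = X.o e := (X.o_bar e).symm

-- ## tailed loop count

noncomputable def SerreGraph.T (X : SerreGraph) (m : ℕ) (x : X.V) : ℕ :=
  Nat.card {p : Fin m → X.E // X.IsGeodesicLoopAt x p ∧ X.HasTail p}

lemma c_eq_N_add_T (hfin : ∀ x : X.V, (X.edgesAt x).Finite) (m : ℕ) (x : X.V) :
    X.c m x = X.N m x + X.T m x := by
  haveI := finite_GL' hfin m x
  rw [SerreGraph.c, card_split (X.IsGeodesicLoopAt x) (fun p => ¬ X.HasTail p)]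
  simp only [SerreGraph.N, SerreGraph.T, not_not]

lemma T_one (x : X.V) : X.T 1 x = 0 := by
  rw [SerreGraph.T, Nat.card_eq_zero]
  left
  refine ⟨fun p => ?_⟩
  obtain ⟨h, ht⟩ := p.2.2
  exact X.bar_ne _ ht.symm

lemma T_two (x : X.V) : X.T 2 x = 0 := by
  rw [SerreGraph.T, Nat.card_eq_zero]
  left
  refine ⟨fun p => ?_⟩
  obtain ⟨h, ht⟩ := p.2.2
  exact p.2.1.2.1 0 (by omega) ht

-- ## E3 : tail decomposition

lemma E3card (x : X.V) (k : ℕ) (hk : 0 < k) :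
    X.T (k+2) x =
    Nat.card {z : ↥(X.edgesAt x) × (Fin k → X.E) //
      X.IsGeodesicLoopAt (X.t z.1.1) z.2 ∧ z.2 ⟨0, hk⟩ ≠ X.bar z.1.1 ∧
        z.2 ⟨k-1, by omega⟩ ≠ z.1.1} := by
  refine Nat.card_congr ?_
  refine
    { toFun := fun p =>
        ⟨(⟨p.1 ⟨0, by omega⟩, (p.2.1.2.2 (by omega)).1⟩, fun i => p.1 ⟨i.1+1, by omega⟩), ?_, ?_, ?_⟩
      invFun := fun z =>
        ⟨fun j => if h0 : j.1 = 0 then z.1.1.1 else if h1 : j.1 = k+1 then X.bar z.1.1.1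
            else z.1.2 ⟨j.1-1, by omega⟩, ?_, ?_⟩
      left_inv := ?_
      right_inv := ?_ }
  · -- IsGeodesicLoopAt (t (p 0)) middle
    obtain ⟨⟨hpath, hnb, hloop⟩, htail⟩ := p.2
    refine ⟨fun i h => hpath (i+1) (by omega), fun i h => hnb (i+1) (by omega),
      fun h => ⟨(hpath 0 (by omega)).symm, ?_⟩⟩
    obtain ⟨h0, ht⟩ := htail
    have ht' : p.1 ⟨k+1, by omega⟩ = X.bar (p.1 ⟨0, h0⟩) :=
      (congrFin p.1 (by omega) _ (by omega)).symm.trans ht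
    show X.t (p.1 ⟨k-1+1, by omega⟩) = X.t (p.1 ⟨0, by omega⟩)
    rw [congrFin p.1 (by omega) (by omega : k < k+2) (by omega), hpath k (by omega), ht', o_bar']
  · -- middle 0 ≠ bar e
    exact p.2.1.2.1 0 (by omega)
  · -- middle last ≠ e
    obtain ⟨⟨hpath, hnb, hloop⟩, htail⟩ := p.2
    obtain ⟨h0, ht⟩ := htail
    have ht' : p.1 ⟨k+1, by omega⟩ = X.bar (p.1 ⟨0, h0⟩) :=
      (congrFin p.1 (by omega) _ (by omega)).symm.trans ht
    intro hcon
    apply hnb k (by omega)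
    show p.1 ⟨k+1, by omega⟩ = _
    rw [ht']
    have e1 : p.1 ⟨k-1+1, by omega⟩ = p.1 ⟨k, by omega⟩ := congrFin _ _ _ (by omega)
    have : p.1 ⟨k, by omega⟩ = p.1 ⟨0, h0⟩ := e1.symm.trans hcon
    rw [this]
  · -- constructed p is a geodesic loop at x
    obtain ⟨⟨hpath, hnb, hloop⟩, hne1, hne2⟩ := z.2
    have hoe : X.o z.1.1.1 = x := z.1.1.2
    refine ⟨fun i h => ?_, fun i h => ?_, fun h => ⟨?_, ?_⟩⟩
    · dsimp only
      by_cases h0 : i = 0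
      · rw [dif_pos h0, dif_neg (by omega : ¬ (i+1 = 0)), dif_neg (by omega : ¬ (i+1 = k+1))]
        have := (hloop hk).1
        rw [show X.t z.1.1.1 = X.o (z.1.2 ⟨0, hk⟩) from ((hloop hk).1).symm]
        exact congrArg X.o (congrFin _ _ _ (by omega)).symm
      · rw [dif_neg h0]
        by_cases h1 : i = k
        · rw [dif_neg (by omega : ¬ (i = k+1)), dif_neg (by omega : ¬ (i+1 = 0)),
            dif_pos (by omega : i+1 = k+1), o_bar']
          exact (congrArg X.t (congrFin z.1.2 (by omega) (by omega) (by omega : i-1 = k-1))).trans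
            (hloop hk).2
        · rw [dif_neg (by omega : ¬ (i = k+1)), dif_neg (by omega : ¬ (i+1 = 0)),
            dif_neg (by omega : ¬ (i+1 = k+1))]
          exact (hpath (i-1) (by omega)).trans
            (congrArg X.o (congrFin _ (by omega) (by omega) (by omega)))
    · dsimp only
      by_cases h0 : i = 0
      · rw [dif_neg (by omega : ¬ (i+1 = 0)), dif_neg (by omega : ¬ (i+1 = k+1)), dif_pos h0]
        exact fun hcon => hne1 ((congrFin z.1.2 hk (by omega) (by omega : (0:ℕ) = i+1-1)).trans hcon)
      · rw [dif_neg (by omega : ¬ (i+1 = 0)), dif_neg h0]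
        by_cases h1 : i = k
        · rw [dif_pos (by omega : i+1 = k+1), dif_neg (by omega : ¬ (i = k+1))]
          intro hcon
          apply hne2
          exact (congrFin z.1.2 (by omega) (by omega) (by omega : k-1 = i-1)).trans
            (bar_inj hcon).symm
        · rw [dif_neg (by omega : ¬ (i+1 = k+1)), dif_neg (by omega : ¬ (i = k+1))]
          intro hcon
          apply hnb (i-1) (by omega)
          exact (congrFin z.1.2 (by omega) (by omega) (by omega : i-1+1 = i+1-1)).trans hcon
    · dsimp only
      rw [dif_pos rfl]
      exact hoe
    · dsimp only
      rw [dif_neg (by omega : ¬ (k + 2 - 1 = 0)), dif_pos (by omega : k + 2 - 1 = k + 1), t_bar]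
      exact hoe
  · -- constructed p has a tail
    refine ⟨by omega, ?_⟩
    dsimp only
    rw [dif_neg (by omega : ¬ (k + 2 - 1 = 0)), dif_pos (by omega : k + 2 - 1 = k + 1),
      dif_pos rfl]
  · -- left inverse
    intro p
    apply Subtype.ext
    funext j
    dsimp only
    by_cases h0 : j.1 = 0
    · rw [dif_pos h0]
      exact congrFin p.1 _ j.2 h0.symm
    · rw [dif_neg h0]
      by_cases h1 : j.1 = k+1
      · rw [dif_pos h1]
        obtain ⟨hh, ht⟩ := p.2.2
        have ht' : p.1 ⟨k+1, by omega⟩ = X.bar (p.1 ⟨0, hh⟩) :=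
          (congrFin p.1 (by omega) _ (by omega)).symm.trans ht
        rw [← ht']
        exact congrFin p.1 _ j.2 h1.symm
      · rw [dif_neg h1]
        exact congrFin p.1 _ j.2 (by omega)
  · -- right inverse
    intro z
    apply Subtype.ext
    apply Prod.ext
    · apply Subtype.ext
      dsimp only
      rw [dif_pos rfl]
    · funext i
      dsimp only
      rw [dif_neg (by omega : ¬ (i.1 + 1 = 0)), dif_neg (by omega : ¬ (i.1 + 1 = k + 1))]
      exact congrFin z.1.2 _ i.2 (by omega)

-- ## reversal

lemma bar_swap {a b : X.E} (h : a = X.bar b) : b = X.bar a := by rw [h, X.bar_bar]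

lemma rev_GL (y : X.V) (k : ℕ) (q : Fin k → X.E) (hq : X.IsGeodesicLoopAt y q) :
    X.IsGeodesicLoopAt y (fun i : Fin k => X.bar (q ⟨k-1-i.1, by omega⟩)) := by
  obtain ⟨hpath, hnb, hloop⟩ := hq
  refine ⟨fun i h => ?_, fun i h => ?_, fun h => ⟨?_, ?_⟩⟩
  · show X.t (X.bar (q ⟨k-1-i, by omega⟩)) = X.o (X.bar (q ⟨k-1-(i+1), by omega⟩))
    rw [t_bar, o_bar']
    have h1 : X.t (q ⟨k-1-(i+1), by omega⟩) = X.o (q ⟨k-1-i, by omega⟩) :=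
      calc X.t (q ⟨k-1-(i+1), by omega⟩)
          = X.t (q ⟨k-2-i, by omega⟩) := congrArg X.t (congrFin q (by omega) (by omega) (by omega))
        _ = X.o (q ⟨k-2-i+1, by omega⟩) := hpath (k-2-i) (by omega)
        _ = X.o (q ⟨k-1-i, by omega⟩) := congrArg X.o (congrFin q (by omega) (by omega) (by omega))
    exact h1.symm
  · show X.bar (q ⟨k-1-(i+1), by omega⟩) ≠ X.bar (X.bar (q ⟨k-1-i, by omega⟩))
    rw [X.bar_bar]
    intro hcon
    apply hnb (k-2-i) (by omega)
    calc q ⟨k-2-i+1, by omega⟩ = q ⟨k-1-i, by omega⟩ := congrFin q (by omega) (by omega) (by omega)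
      _ = X.bar (q ⟨k-1-(i+1), by omega⟩) := hcon.symm
      _ = X.bar (q ⟨k-2-i, by omega⟩) := congrArg X.bar (congrFin q (by omega) (by omega) (by omega))
  · show X.o (X.bar (q ⟨k-1-0, by omega⟩)) = y
    rw [o_bar']
    exact (hloop h).2
  · show X.t (X.bar (q ⟨k-1-(k-1), by omega⟩)) = y
    rw [t_bar]
    exact (congrArg X.o (congrFin q _ h (by omega))).trans (hloop h).1

lemma rev_rev (k : ℕ) (q : Fin k → X.E) :
    (fun i : Fin k => X.bar ((fun i' : Fin k => X.bar (q ⟨k-1-i'.1, by omega⟩))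
      ⟨k-1-i.1, by omega⟩)) = q := by
  funext i
  show X.bar (X.bar (q ⟨k-1-(k-1-i.1), by omega⟩)) = q i
  rw [X.bar_bar]
  exact congrFin q _ i.2 (by omega)

lemma E4card (x : X.V) (k : ℕ) (hk : 0 < k) :
    Nat.card {z : ↥(X.edgesAt x) × (Fin k → X.E) //
      X.IsGeodesicLoopAt (X.t z.1.1) z.2 ∧ z.2 ⟨k-1, by omega⟩ = z.1.1} =
    Nat.card {z : ↥(X.edgesAt x) × (Fin k → X.E) //
      X.IsGeodesicLoopAt (X.t z.1.1) z.2 ∧ z.2 ⟨0, hk⟩ = X.bar z.1.1} := by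
  refine Nat.card_congr ?_
  refine
    { toFun := fun z => ⟨(z.1.1, fun i : Fin k => X.bar (z.1.2 ⟨k-1-i.1, by omega⟩)),
        rev_GL _ _ _ z.2.1, ?_⟩
      invFun := fun z => ⟨(z.1.1, fun i : Fin k => X.bar (z.1.2 ⟨k-1-i.1, by omega⟩)),
        rev_GL _ _ _ z.2.1, ?_⟩
      left_inv := ?_
      right_inv := ?_ }
  · show X.bar (z.1.2 ⟨k-1-0, by omega⟩) = X.bar z.1.1.1
    exact congrArg X.bar ((congrFin z.1.2 _ _ (by omega)).trans z.2.2)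
  · show X.bar (z.1.2 ⟨k-1-(k-1), by omega⟩) = z.1.1.1
    rw [(congrFin z.1.2 _ hk (by omega)).trans z.2.2, X.bar_bar]
  · intro z
    apply Subtype.ext
    apply Prod.ext
    · rfl
    · exact rev_rev k z.1.2
  · intro z
    apply Subtype.ext
    apply Prod.ext
    · rfl
    · exact rev_rev k z.1.2

-- ## E5 : rotation

lemma E5card (x : X.V) (k : ℕ) (hk : 0 < k) :
    Nat.card {z : ↥(X.edgesAt x) × (Fin k → X.E) //
      X.IsGeodesicLoopAt (X.t z.1.1) z.2 ∧ z.2 ⟨0, hk⟩ = X.bar z.1.1 ∧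
        z.2 ⟨k-1, by omega⟩ ≠ z.1.1} = X.N k x := by
  rw [SerreGraph.N]
  refine Nat.card_congr ?_
  refine
    { toFun := fun z =>
        ⟨fun i => if h : i.1 = k-1 then X.bar z.1.1.1 else z.1.2 ⟨i.1+1, by omega⟩, ?_, ?_⟩
      invFun := fun w =>
        ⟨(⟨X.bar (w.1 ⟨k-1, by omega⟩), ?_⟩,
          fun i => if h : i.1 = 0 then w.1 ⟨k-1, by omega⟩ else w.1 ⟨i.1-1, by omega⟩), ?_, ?_, ?_⟩
      left_inv := ?_
      right_inv := ?_ }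
  · -- GL x w
    obtain ⟨⟨hpath, hnb, hloop⟩, hP, hQ⟩ := z.2
    refine ⟨fun i h => ?_, fun i h => ?_, fun h => ⟨?_, ?_⟩⟩
    · dsimp only
      rw [dif_neg (by omega : ¬ (i = k-1))]
      by_cases h1 : i+1 = k-1
      · rw [dif_pos h1, o_bar']
        exact (congrArg X.t (congrFin z.1.2 (by omega) (by omega) (by omega : i+1 = k-1))).trans
          (hloop hk).2
      · rw [dif_neg h1]
        exact hpath (i+1) (by omega)
    · dsimp only
      rw [dif_neg (by omega : ¬ (i = k-1))]
      by_cases h1 : i+1 = k-1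
      · rw [dif_pos h1]
        intro hcon
        apply z.2.2.2
        exact (congrFin z.1.2 (by omega) (by omega) (by omega : k-1 = i+1)).trans (bar_inj hcon).symm
      · rw [dif_neg h1]
        exact hnb (i+1) (by omega)
    · dsimp only
      by_cases h1 : (0 : ℕ) = k-1
      · rw [dif_pos h1, o_bar']
        -- k = 1 : t e = x
        have h2 : X.t (X.bar z.1.1.1) = X.t z.1.1.1 :=
          congrArg X.t (((congrFin z.1.2 (by omega) hk (by omega : k-1 = 0)).trans hP).symm) ▸
            (hloop hk).2
        rw [← h2, t_bar]
        exact z.1.1.2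
      · rw [dif_neg h1]
        have h2 : X.o (z.1.2 ⟨0+1, by omega⟩) = X.t (z.1.2 ⟨0, hk⟩) := (hpath 0 (by omega)).symm
        rw [h2, hP, t_bar]
        exact z.1.1.2
    · dsimp only
      rw [dif_pos rfl, t_bar]
      exact z.1.1.2
  · -- ¬ HasTail w
    obtain ⟨⟨hpath, hnb, hloop⟩, hP, hQ⟩ := z.2
    rintro ⟨h0, htl⟩
    revert htl
    dsimp only
    rw [dif_pos rfl]
    by_cases h1 : (0 : ℕ) = k-1
    · rw [dif_pos h1]
      intro hcon
      exact X.bar_ne _ (bar_inj hcon).symm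
    · rw [dif_neg h1]
      intro hcon
      apply hnb 0 (by omega)
      have h2 : X.bar (z.1.2 ⟨0, by omega⟩) = z.1.1.1 := by
        show X.bar (z.1.2 ⟨0, hk⟩) = z.1.1.1
        rw [hP, X.bar_bar]
      exact (bar_inj hcon).symm.trans h2.symm
  · -- o (bar w_last) = x
    show X.o (X.bar (w.1 ⟨k-1, by omega⟩)) = x
    rw [o_bar']
    exact (w.2.1.2.2 (by omega)).2
  · -- GL (t e) q
    obtain ⟨⟨hpath, hnb, hloop⟩, hnt⟩ := w.2
    have hte : X.t (X.bar (w.1 ⟨k-1, by omega⟩)) = X.o (w.1 ⟨k-1, by omega⟩) := t_bar _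
    refine ⟨fun i h => ?_, fun i h => ?_, fun h => ⟨?_, ?_⟩⟩
    · dsimp only
      by_cases h1 : i = 0
      · rw [dif_pos h1, dif_neg (by omega : ¬ (i+1 = 0))]
        have e1 : X.t (w.1 ⟨k-1, by omega⟩) = x := (hloop (by omega)).2
        have e2 : X.o (w.1 ⟨i+1-1, by omega⟩) = x :=
          (congrArg X.o (congrFin w.1 (by omega) (by omega) (by omega : i+1-1 = 0))).trans
            (hloop (by omega)).1
        rw [e1, e2]
      · rw [dif_neg h1, dif_neg (by omega : ¬ (i+1 = 0))]
        exact (congrArg X.t (congrFin w.1 (by omega) (by omega) (by omega : i-1 = i-1))).trans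
          ((hpath (i-1) (by omega)).trans
            (congrArg X.o (congrFin w.1 (by omega) (by omega) (by omega : i-1+1 = i+1-1))))
    · dsimp only
      by_cases h1 : i = 0
      · rw [dif_pos h1, dif_neg (by omega : ¬ (i+1 = 0))]
        intro hcon
        apply hnt
        refine ⟨by omega, ?_⟩
        refine bar_swap ?_
        exact (congrFin w.1 (by omega) (by omega) (by omega : 0 = i+1-1)).trans hcon
      · rw [dif_neg h1, dif_neg (by omega : ¬ (i+1 = 0))]
        intro hcon
        apply hnb (i-1) (by omega)
        exact (congrFin w.1 (by omega) (by omega) (by omega : i-1+1 = i+1-1)).trans hcon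
    · dsimp only
      rw [dif_pos rfl, hte]
    · dsimp only
      by_cases h1 : k-1 = 0
      · rw [dif_pos h1, hte]
        have e2 : X.o (w.1 ⟨k-1, by omega⟩) = x :=
          (congrArg X.o (congrFin w.1 (by omega) (by omega) h1)).trans (hloop (by omega)).1
        exact (hloop (by omega)).2.trans e2.symm
      · rw [dif_neg h1, hte]
        exact (congrArg X.t (congrFin w.1 (by omega) (by omega) (by omega : k-1-1 = k-2))).trans
          ((hpath (k-2) (by omega)).trans
            (congrArg X.o (congrFin w.1 (by omega) (by omega) (by omega : k-2+1 = k-1))))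
  · -- q 0 = bar e
    dsimp only
    rw [dif_pos rfl, X.bar_bar]
  · -- q last ≠ e
    obtain ⟨⟨hpath, hnb, hloop⟩, hnt⟩ := w.2
    dsimp only
    by_cases h1 : k-1 = 0
    · rw [dif_pos h1]
      intro hcon
      exact X.bar_ne _ hcon.symm
    · rw [dif_neg h1]
      intro hcon
      apply hnb (k-2) (by omega)
      refine (congrFin w.1 (by omega) (by omega) (by omega : k-2+1 = k-1)).trans ?_
      refine bar_swap ?_
      exact (congrFin w.1 (by omega) (by omega) (by omega : k-1-1 = k-2)).symm.trans hcon
  · -- left inverse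
    intro z
    apply Subtype.ext
    apply Prod.ext
    · apply Subtype.ext
      dsimp only
      rw [dif_pos rfl, X.bar_bar]
    · funext i
      dsimp only
      by_cases h1 : i.1 = 0
      · rw [dif_pos h1, dif_pos rfl]
        exact (z.2.2.1.symm.trans (congrFin z.1.2 hk i.2 h1.symm)).symm.symm
      · rw [dif_neg h1, dif_neg (by omega : ¬ (i.1-1 = k-1))]
        exact congrFin z.1.2 _ i.2 (by omega)
  · -- right inverse
    intro w
    apply Subtype.ext
    funext i
    dsimp only
    by_cases h1 : i.1 = k-1
    · rw [dif_pos h1, X.bar_bar]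
      exact congrFin w.1 _ i.2 h1.symm
    · rw [dif_neg h1, dif_neg (by omega : ¬ (i.1+1 = 0))]
      exact congrFin w.1 _ i.2 (by omega)

-- ## E6 : loops with tail starting with bar e

lemma E6zero1 (x : X.V) :
    Nat.card {z : ↥(X.edgesAt x) × (Fin 1 → X.E) //
      X.IsGeodesicLoopAt (X.t z.1.1) z.2 ∧ z.2 ⟨0, by omega⟩ = X.bar z.1.1 ∧
        z.2 ⟨1-1, by omega⟩ = z.1.1} = 0 := by
  rw [Nat.card_eq_zero]
  left
  exact ⟨fun z => X.bar_ne _ (z.2.2.1.symm.trans z.2.2.2)⟩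

lemma E6zero2 (x : X.V) :
    Nat.card {z : ↥(X.edgesAt x) × (Fin 2 → X.E) //
      X.IsGeodesicLoopAt (X.t z.1.1) z.2 ∧ z.2 ⟨0, by omega⟩ = X.bar z.1.1 ∧
        z.2 ⟨2-1, by omega⟩ = z.1.1} = 0 := by
  rw [Nat.card_eq_zero]
  left
  refine ⟨fun z => z.2.1.2.1 0 (by omega) ?_⟩
  exact z.2.2.2.trans ((congrArg X.bar z.2.2.1).trans (X.bar_bar _)).symm

lemma E6card (x : X.V) (j : ℕ) :
    Nat.card {z : ↥(X.edgesAt x) × (Fin (j+3) → X.E) //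
      X.IsGeodesicLoopAt (X.t z.1.1) z.2 ∧ z.2 ⟨0, by omega⟩ = X.bar z.1.1 ∧
        z.2 ⟨j+3-1, by omega⟩ = z.1.1} =
    Nat.card {w : (Fin (j+1) → X.E) × ↥(X.edgesAt x) //
      X.IsGeodesicLoopAt x w.1 ∧ w.2.1 ≠ w.1 ⟨0, by omega⟩ ∧
        w.2.1 ≠ X.bar (w.1 ⟨j, by omega⟩)} := by
  refine Nat.card_congr ?_
  refine
    { toFun := fun z => ⟨(fun i => z.1.2 ⟨i.1+1, by omega⟩, z.1.1), ?_, ?_, ?_⟩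
      invFun := fun w => ⟨(w.1.2, fun i => if h0 : i.1 = 0 then X.bar w.1.2.1
          else if h1 : i.1 = j+2 then w.1.2.1 else w.1.1 ⟨i.1-1, by omega⟩), ?_, ?_, ?_⟩
      left_inv := ?_
      right_inv := ?_ }
  · -- GL x ℓ
    obtain ⟨⟨hpath, hnb, hloop⟩, hP, hQ⟩ := z.2
    refine ⟨fun i h => hpath (i+1) (by omega), fun i h => hnb (i+1) (by omega),
      fun h => ⟨?_, ?_⟩⟩
    · have h1 : X.t (z.1.2 ⟨0, by omega⟩) = X.o (z.1.2 ⟨0+1, by omega⟩) := hpath 0 (by omega)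
      have h2 : X.t (z.1.2 ⟨0, by omega⟩) = X.o z.1.1.1 := by
        show X.t (z.1.2 ⟨0, by omega⟩) = _
        rw [show z.1.2 ⟨0, by omega⟩ = X.bar z.1.1.1 from hP, t_bar]
      exact h1.symm.trans (h2.trans z.1.1.2)
    · show X.t (z.1.2 ⟨j+1-1+1, by omega⟩) = x
      have h2 : z.1.2 ⟨j+1+1, by omega⟩ = z.1.1.1 :=
        (congrFin z.1.2 (by omega) (by omega) (by omega : j+1+1 = j+3-1)).trans hQ
      calc X.t (z.1.2 ⟨j+1-1+1, by omega⟩)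
          = X.t (z.1.2 ⟨j+1, by omega⟩) := congrArg X.t (congrFin _ (by omega) (by omega) (by omega))
        _ = X.o (z.1.2 ⟨j+1+1, by omega⟩) := hpath (j+1) (by omega)
        _ = x := by rw [h2]; exact z.1.1.2
  · -- f ≠ ℓ 0
    obtain ⟨⟨hpath, hnb, hloop⟩, hP, hQ⟩ := z.2
    intro hcon
    have hcon' : z.1.1.1 = z.1.2 ⟨0+1, by omega⟩ := hcon
    apply hnb 0 (by omega)
    show z.1.2 ⟨0+1, by omega⟩ = X.bar (z.1.2 ⟨0, by omega⟩)
    rw [← hcon', show z.1.2 ⟨0, by omega⟩ = X.bar z.1.1.1 from hP, X.bar_bar]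
  · -- f ≠ bar (ℓ j)
    obtain ⟨⟨hpath, hnb, hloop⟩, hP, hQ⟩ := z.2
    intro hcon
    have hcon' : z.1.1.1 = X.bar (z.1.2 ⟨j+1, by omega⟩) := hcon
    apply hnb (j+1) (by omega)
    show z.1.2 ⟨j+1+1, by omega⟩ = X.bar (z.1.2 ⟨j+1, by omega⟩)
    rw [← hcon']
    exact (congrFin z.1.2 (by omega) (by omega) (by omega : j+1+1 = j+3-1)).trans hQ
  · -- GL (t f) q
    obtain ⟨⟨hpath, hnb, hloop⟩, hne1, hne2⟩ := w.2
    refine ⟨fun i h => ?_, fun i h => ?_, fun h => ⟨?_, ?_⟩⟩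
    · dsimp only
      by_cases h0 : i = 0
      · rw [dif_pos h0, dif_neg (by omega : ¬ (i+1 = 0)), dif_neg (by omega : ¬ (i+1 = j+2)),
          t_bar]
        have h2 : X.o (w.1.1 ⟨i+1-1, by omega⟩) = x :=
          (congrArg X.o (congrFin w.1.1 (by omega) (by omega) (by omega : i+1-1 = 0))).trans
            (hloop (by omega)).1
        rw [h2]
        exact w.1.2.2
      · rw [dif_neg h0]
        by_cases h1 : i = j+1
        · rw [dif_neg (by omega : ¬ (i = j+2)), dif_neg (by omega : ¬ (i+1 = 0)),
            dif_pos (by omega : i+1 = j+2)]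
          have h2 : X.t (w.1.1 ⟨i-1, by omega⟩) = x :=
            (congrArg X.t (congrFin w.1.1 (by omega) (by omega) (by omega : i-1 = j))).trans
              (hloop (by omega)).2
          rw [h2]
          exact w.1.2.2.symm
        · rw [dif_neg (by omega : ¬ (i = j+2)), dif_neg (by omega : ¬ (i+1 = 0)),
            dif_neg (by omega : ¬ (i+1 = j+2))]
          exact (hpath (i-1) (by omega)).trans
            (congrArg X.o (congrFin w.1.1 (by omega) (by omega) (by omega)))
    · dsimp only
      by_cases h0 : i = 0
      · rw [dif_neg (by omega : ¬ (i+1 = 0)), dif_neg (by omega : ¬ (i+1 = j+2)), dif_pos h0,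
          X.bar_bar]
        intro hcon
        apply hne1
        exact hcon.symm.trans (congrFin w.1.1 (by omega) (by omega) (by omega))
      · rw [dif_neg (by omega : ¬ (i+1 = 0)), dif_neg h0]
        by_cases h1 : i = j+1
        · rw [dif_pos (by omega : i+1 = j+2), dif_neg (by omega : ¬ (i = j+2))]
          intro hcon
          apply hne2
          exact hcon.trans (congrArg X.bar (congrFin w.1.1 (by omega) (by omega) (by omega)))
        · rw [dif_neg (by omega : ¬ (i+1 = j+2)), dif_neg (by omega : ¬ (i = j+2))]
          intro hcon
          apply hnb (i-1) (by omega)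
          exact (congrFin w.1.1 (by omega) (by omega) (by omega : i-1+1 = i+1-1)).trans hcon
    · dsimp only
      rw [dif_pos rfl, o_bar']
    · dsimp only
      rw [dif_neg (by omega : ¬ (j+3-1 = 0)), dif_pos (by omega : j+3-1 = j+2)]
  · -- q 0 = bar f
    dsimp only
    rw [dif_pos rfl]
  · -- q last = f
    dsimp only
    rw [dif_neg (by omega : ¬ (j+3-1 = 0)), dif_pos (by omega : j+3-1 = j+2)]
  · -- left inverse
    intro z
    apply Subtype.ext
    apply Prod.ext
    · rfl
    · funext i
      dsimp only
      by_cases h0 : i.1 = 0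
      · rw [dif_pos h0]
        exact (z.2.2.1.symm.trans (congrFin z.1.2 (by omega) i.2 h0.symm)).symm.symm
      · rw [dif_neg h0]
        by_cases h1 : i.1 = j+2
        · rw [dif_pos h1]
          exact (z.2.2.2.symm.trans (congrFin z.1.2 (by omega) i.2 (by omega))).symm.symm
        · rw [dif_neg h1]
          exact congrFin z.1.2 (by omega) i.2 (by omega)
  · -- right inverse
    intro w
    apply Subtype.ext
    apply Prod.ext
    · funext i
      dsimp only
      rw [dif_neg (by omega : ¬ (i.1+1 = 0)), dif_neg (by omega : ¬ (i.1+1 = j+2))]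
      exact congrFin w.1.1 (by omega) i.2 (by omega)
    · rfl

-- ## counting helpers

lemma card_ne_pair {α : Type} [Fintype α] (a b : α) :
    (Nat.card {f : α // f ≠ a ∧ f ≠ b} : ℤ) = Fintype.card α - (if a = b then 1 else 2) := by
  classical
  rw [Nat.card_eq_fintype_card, Fintype.card_subtype]
  have hfilter : Finset.filter (fun f => f ≠ a ∧ f ≠ b) Finset.univ =
      Finset.univ \ {a, b} := by
    ext f
    simp [not_or]
  rw [hfilter]
  have hcard : ({a, b} : Finset α).card = if a = b then 1 else 2 := by
    by_cases h : a = b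
    · subst h; simp
    · rw [if_neg h, Finset.card_pair h]
  have h2 : (Finset.univ \ {a, b}).card + ({a, b} : Finset α).card = Fintype.card α := by
    rw [Finset.card_sdiff_add_card, Finset.union_eq_left.mpr (Finset.subset_univ _),
      Finset.card_univ]
  rw [← h2, hcard]
  split_ifs <;> push_cast <;> ring

lemma card_sigma_fst {β : Type} {k : ℕ} (x : X.V)
    (P : (Fin k → X.E) → Prop) (C : (Fin k → X.E) → β → Prop) :
    Nat.card {w : (Fin k → X.E) × β // P w.1 ∧ C w.1 w.2} =
    Nat.card (Σ ℓ : {ℓ : Fin k → X.E // P ℓ}, {f : β // C ℓ.1 f}) := by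
  refine Nat.card_congr ?_
  exact
    { toFun := fun w => ⟨⟨w.1.1, w.2.1⟩, ⟨w.1.2, w.2.2⟩⟩
      invFun := fun s => ⟨(s.1.1, s.2.1), s.1.2, s.2.2⟩
      left_inv := fun w => rfl
      right_inv := fun s => rfl }

lemma card_sigma_snd {β : Type} {k : ℕ} (x : X.V)
    (P : β → Prop) (C : β → (Fin k → X.E) → Prop) :
    Nat.card {w : β × (Fin k → X.E) // P w.1 ∧ C w.1 w.2} =
    Nat.card (Σ e : {e : β // P e}, {q : Fin k → X.E // C e.1 q}) := by
  refine Nat.card_congr ?_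
  exact
    { toFun := fun w => ⟨⟨w.1.1, w.2.1⟩, ⟨w.1.2, w.2.2⟩⟩
      invFun := fun s => ⟨(s.1.1, s.2.1), s.1.2, s.2.2⟩
      left_inv := fun w => rfl
      right_inv := fun s => rfl }

lemma card_sigma_plain {β γ : Type} (C : β → γ → Prop) :
    Nat.card {w : β × γ // C w.1 w.2} = Nat.card (Σ e : β, {q : γ // C e q}) := by
  refine Nat.card_congr ?_
  exact
    { toFun := fun w => ⟨w.1.1, ⟨w.1.2, w.2⟩⟩
      invFun := fun s => ⟨(s.1, s.2.1), s.2.2⟩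
      left_inv := fun w => rfl
      right_inv := fun s => rfl }

-- ## the D count

lemma Dcard (hfin : ∀ x : X.V, (X.edgesAt x).Finite) (x : X.V) (j : ℕ) :
    (Nat.card {w : (Fin (j+1) → X.E) × ↥(X.edgesAt x) //
        X.IsGeodesicLoopAt x w.1 ∧ w.2.1 ≠ w.1 ⟨0, by omega⟩ ∧
          w.2.1 ≠ X.bar (w.1 ⟨j, by omega⟩)} : ℤ) =
      ((X.deg x : ℤ) - 2) * (X.c (j+1) x : ℤ) + (X.T (j+1) x : ℤ) := by
  classical
  haveI hFL : Finite {ℓ : Fin (j+1) → X.E // X.IsGeodesicLoopAt x ℓ} := finite_GL' hfin _ x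
  haveI : Fintype {ℓ : Fin (j+1) → X.E // X.IsGeodesicLoopAt x ℓ} := Fintype.ofFinite _
  haveI : Fintype ↥(X.edgesAt x) := (hfin x).fintype
  have hsig := card_sigma_fst (X := X) (β := ↥(X.edgesAt x)) (k := j+1) x (X.IsGeodesicLoopAt x)
    (fun ℓ f => f.1 ≠ ℓ ⟨0, by omega⟩ ∧ f.1 ≠ X.bar (ℓ ⟨j, by omega⟩))
  rw [hsig, card_sigma']
  rw [finsum_eq_sum_of_fintype]
  push_cast
  have hterm : ∀ ℓ : {ℓ : Fin (j+1) → X.E // X.IsGeodesicLoopAt x ℓ},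
      (Nat.card {f : ↥(X.edgesAt x) //
          f.1 ≠ ℓ.1 ⟨0, by omega⟩ ∧ f.1 ≠ X.bar (ℓ.1 ⟨j, by omega⟩)} : ℤ) =
        (X.deg x : ℤ) - 2 + (if X.HasTail ℓ.1 then 1 else 0) := by
    intro ℓ
    have ha : ℓ.1 ⟨0, by omega⟩ ∈ X.edgesAt x := (ℓ.2.2.2 (by omega)).1
    have hb : X.bar (ℓ.1 ⟨j, by omega⟩) ∈ X.edgesAt x := by
      show X.o _ = x
      rw [o_bar']
      exact (ℓ.2.2.2 (by omega)).2
    have hcongr : Nat.card {f : ↥(X.edgesAt x) //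
          f.1 ≠ ℓ.1 ⟨0, by omega⟩ ∧ f.1 ≠ X.bar (ℓ.1 ⟨j, by omega⟩)} =
        Nat.card {f : ↥(X.edgesAt x) // f ≠ ⟨ℓ.1 ⟨0, by omega⟩, ha⟩ ∧
          f ≠ ⟨X.bar (ℓ.1 ⟨j, by omega⟩), hb⟩} := by
      refine Nat.card_congr (Equiv.subtypeEquivRight fun f => ?_)
      rw [Ne, Ne, Ne, Ne, Subtype.ext_iff, Subtype.ext_iff]
    rw [hcongr, card_ne_pair]
    have hiff : (⟨ℓ.1 ⟨0, by omega⟩, ha⟩ : ↥(X.edgesAt x)) = ⟨X.bar (ℓ.1 ⟨j, by omega⟩), hb⟩ ↔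
        X.HasTail ℓ.1 := by
      rw [Subtype.ext_iff]
      constructor
      · intro h
        exact ⟨by omega, bar_swap (show ℓ.1 ⟨0, by omega⟩ = _ from h)⟩
      · rintro ⟨h0, ht⟩
        show ℓ.1 ⟨0, by omega⟩ = _
        refine bar_swap ?_
        exact (congrFin ℓ.1 (by omega) (by omega) (by omega : j+1-1 = j)).symm.trans ht
    have hdeg : (X.deg x : ℤ) = (Fintype.card ↥(X.edgesAt x) : ℤ) := by
      rw [SerreGraph.deg, Nat.card_eq_fintype_card]
    rw [hdeg]
    by_cases h : X.HasTail ℓ.1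
    · rw [if_pos (hiff.mpr h), if_pos h]; ring
    · rw [if_neg (fun hc => h (hiff.mp hc)), if_neg h]; ring
  rw [Finset.sum_congr rfl (fun ℓ _ => hterm ℓ)]
  rw [Finset.sum_add_distrib, Finset.sum_const, Finset.sum_boole]
  have hT : (Finset.filter (fun ℓ : {ℓ : Fin (j+1) → X.E // X.IsGeodesicLoopAt x ℓ} =>
      X.HasTail ℓ.1) Finset.univ).card = X.T (j+1) x := by
    rw [← Fintype.card_subtype, SerreGraph.T, ← Nat.card_eq_fintype_card]
    exact Nat.card_congr (Equiv.subtypeSubtypeEquivSubtypeInter _ _)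
  rw [hT]
  have hc : (((Finset.univ : Finset {ℓ : Fin (j+1) → X.E // X.IsGeodesicLoopAt x ℓ}).card : ℕ) : ℤ) =
      (X.c (j+1) x : ℤ) := by
    rw [Finset.card_univ, SerreGraph.c, Nat.card_eq_fintype_card]
  rw [nsmul_eq_mul, hc]
  ring

-- ## finiteness for product subtypes

lemma finite_prodGL (hfin : ∀ x : X.V, (X.edgesAt x).Finite) (x : X.V) (k : ℕ)
    (S : (↥(X.edgesAt x) × (Fin k → X.E)) → Prop)
    (hS : ∀ z, S z → X.IsGeodesicLoopAt (X.t z.1.1) z.2) : Finite {z // S z} := by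
  haveI : Finite ↥(X.edgesAt x) := (hfin x).to_subtype
  haveI : ∀ e : ↥(X.edgesAt x), Finite {q : Fin k → X.E // X.IsGeodesicLoopAt (X.t e.1) q} :=
    fun e => finite_GL' hfin k (X.t e.1)
  set F : {z // S z} →
      Σ e : ↥(X.edgesAt x), {q : Fin k → X.E // X.IsGeodesicLoopAt (X.t e.1) q} :=
    fun z => ⟨z.1.1, z.1.2, hS _ z.2⟩ with hF
  have hinj : Function.Injective F := by
    intro a b h
    have h2 := congrArg (fun s => (s.1, s.2.1)) h
    exact Subtype.ext (Prod.ext (congrArg Prod.fst h2) (congrArg Prod.snd h2))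
  exact Finite.of_injective F hinj

-- ## master counting step

lemma Tstep (hfin : ∀ x : X.V, (X.edgesAt x).Finite) (x : X.V) (k : ℕ) (hk : 0 < k) :
    (X.T (k+2) x : ℤ) =
      (∑ e ∈ (hfin x).toFinset, (X.c k (X.t e) : ℤ)) - 2 * (X.N k x : ℤ) -
        (Nat.card {z : ↥(X.edgesAt x) × (Fin k → X.E) //
          X.IsGeodesicLoopAt (X.t z.1.1) z.2 ∧ z.2 ⟨0, hk⟩ = X.bar z.1.1 ∧
            z.2 ⟨k-1, by omega⟩ = z.1.1} : ℤ) := by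
  classical
  haveI : Fintype ↥(X.edgesAt x) := (hfin x).fintype
  set R : (↥(X.edgesAt x) × (Fin k → X.E)) → Prop :=
    fun z => X.IsGeodesicLoopAt (X.t z.1.1) z.2 with hR
  set P : (↥(X.edgesAt x) × (Fin k → X.E)) → Prop :=
    fun z => z.2 ⟨0, hk⟩ = X.bar z.1.1 with hP
  set Q : (↥(X.edgesAt x) × (Fin k → X.E)) → Prop :=
    fun z => z.2 ⟨k-1, by omega⟩ = z.1.1 with hQ
  haveI f1 : Finite {z // R z} := finite_prodGL hfin x k R (fun z h => h)
  haveI f2 : Finite {z // R z ∧ ¬ P z} := finite_prodGL hfin x k _ (fun z h => h.1)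
  haveI f3 : Finite {z // R z ∧ Q z} := finite_prodGL hfin x k _ (fun z h => h.1)
  haveI f4 : Finite {z // R z ∧ P z} := finite_prodGL hfin x k _ (fun z h => h.1)
  -- the splits
  have s1 : Nat.card {z // R z} =
      Nat.card {z // R z ∧ P z} + Nat.card {z // R z ∧ ¬ P z} := card_split R P
  have s2 : Nat.card {z // R z ∧ ¬ P z} =
      Nat.card {z // (R z ∧ ¬ P z) ∧ Q z} + Nat.card {z // (R z ∧ ¬ P z) ∧ ¬ Q z} :=
    card_split _ Q
  have s3 : Nat.card {z // R z ∧ Q z} =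
      Nat.card {z // (R z ∧ Q z) ∧ P z} + Nat.card {z // (R z ∧ Q z) ∧ ¬ P z} :=
    card_split _ P
  have s4 : Nat.card {z // R z ∧ P z} =
      Nat.card {z // (R z ∧ P z) ∧ Q z} + Nat.card {z // (R z ∧ P z) ∧ ¬ Q z} :=
    card_split _ Q
  -- congruences
  have c1 : Nat.card {z // (R z ∧ ¬ P z) ∧ Q z} = Nat.card {z // (R z ∧ Q z) ∧ ¬ P z} :=
    Nat.card_congr (Equiv.subtypeEquivRight fun z => by tauto)
  have c2 : Nat.card {z // (R z ∧ ¬ P z) ∧ ¬ Q z} =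
      Nat.card {z // R z ∧ ¬ P z ∧ ¬ Q z} :=
    Nat.card_congr (Equiv.subtypeEquivRight fun z => by tauto)
  have c3 : Nat.card {z // (R z ∧ Q z) ∧ P z} =
      Nat.card {z // R z ∧ P z ∧ Q z} :=
    Nat.card_congr (Equiv.subtypeEquivRight fun z => by tauto)
  have c4 : Nat.card {z // (R z ∧ P z) ∧ Q z} =
      Nat.card {z // R z ∧ P z ∧ Q z} :=
    Nat.card_congr (Equiv.subtypeEquivRight fun z => by tauto)
  have c5 : Nat.card {z // (R z ∧ P z) ∧ ¬ Q z} =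
      Nat.card {z // R z ∧ P z ∧ ¬ Q z} :=
    Nat.card_congr (Equiv.subtypeEquivRight fun z => by tauto)
  -- identifications
  have hT : X.T (k+2) x = Nat.card {z // R z ∧ ¬ P z ∧ ¬ Q z} := E3card x k hk
  have hrev : Nat.card {z // R z ∧ Q z} = Nat.card {z // R z ∧ P z} := E4card x k hk
  have hN : Nat.card {z // R z ∧ P z ∧ ¬ Q z} = X.N k x := E5card x k hk
  haveI : ∀ e : ↥(X.edgesAt x), Finite {q : Fin k → X.E // X.IsGeodesicLoopAt (X.t e.1) q} :=
    fun e => finite_GL' hfin k (X.t e.1)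
  -- cardinality of {R}
  have hceq : Nat.card {z // R z} = ∑ e ∈ (hfin x).toFinset, X.c k (X.t e) := by
    rw [hR]
    rw [card_sigma_plain (fun (e : ↥(X.edgesAt x)) (q : Fin k → X.E) =>
      X.IsGeodesicLoopAt (X.t e.1) q), card_sigma', finsum_eq_sum_of_fintype]
    rw [Finset.sum_subtype (hfin x).toFinset (fun a => (hfin x).mem_toFinset)
      (fun e => X.c k (X.t e))]
    rfl
  have hcast : ((∑ e ∈ (hfin x).toFinset, X.c k (X.t e) : ℕ) : ℤ) =
      ∑ e ∈ (hfin x).toFinset, (X.c k (X.t e) : ℤ) := by push_cast; rfl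
  have key : X.T (k+2) x + 2 * X.N k x + Nat.card {z // R z ∧ P z ∧ Q z} =
      ∑ e ∈ (hfin x).toFinset, X.c k (X.t e) := by omega
  have hB : Nat.card {z // R z ∧ P z ∧ Q z} =
      Nat.card {z : ↥(X.edgesAt x) × (Fin k → X.E) //
        X.IsGeodesicLoopAt (X.t z.1.1) z.2 ∧ z.2 ⟨0, hk⟩ = X.bar z.1.1 ∧
          z.2 ⟨k-1, by omega⟩ = z.1.1} := rfl
  rw [hB] at key
  omega

-- ## lap conversion

lemma lap_sum (hfin : ∀ x : X.V, (X.edgesAt x).Finite) (x : X.V) (k : ℕ) :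
    ∑ e ∈ (hfin x).toFinset, (X.c k (X.t e) : ℤ) =
      (X.deg x : ℤ) * (X.c k x : ℤ) - X.lap (fun v => (X.c k v : ℤ)) x := by
  rw [SerreGraph.lap]
  rw [finsum_mem_eq_finite_toFinset_sum _ (hfin x)]
  ring

-- ## Icc shift

lemma sum_Icc_shift (g : ℕ → ℤ) : ∀ K : ℕ, 1 ≤ K →
    ∑ i ∈ Finset.Icc 1 K, g i = g 1 + ∑ i ∈ Finset.Icc 1 (K-1), g (i+1) := by
  intro K
  induction K with
  | zero => omega
  | succ n ih =>
    intro _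
    by_cases hn : n = 0
    · subst hn
      rw [Finset.Icc_self, Finset.sum_singleton, show (1:ℕ)+1-1-1 = 0 from rfl,
        Finset.Icc_eq_empty (by omega), Finset.sum_empty, add_zero]
    · have e1 : Finset.Icc 1 (n-1+1) = Finset.Icc 1 n := by
        rw [show n-1+1 = n from by omega]
      have htop := Finset.sum_Icc_succ_top (by omega : 1 ≤ (n-1)+1) (fun i => g (i+1))
      rw [e1] at htop
      rw [Finset.sum_Icc_succ_top (by omega : 1 ≤ n+1) g, ih (by omega),
        show n+1-1 = n from by omega, htop, show n-1+1+1 = n+1 from by omega]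
      ring

-- ## algebraic identity

lemma Falg (C Lp : ℕ → ℤ) (d : ℤ) (j : ℕ) :
    d * (∑ i ∈ Finset.Icc 1 ((j+5+1)/2 - 1), C (j+5-2*i)) -
      (∑ i ∈ Finset.Icc 1 ((j+5+1)/2 - 1), (i:ℤ) * Lp (j+5-2*i)) =
    d * C (j+3) - Lp (j+3) +
      2 * (d * (∑ i ∈ Finset.Icc 1 ((j+3+1)/2 - 1), C (j+3-2*i)) -
        (∑ i ∈ Finset.Icc 1 ((j+3+1)/2 - 1), (i:ℤ) * Lp (j+3-2*i))) -
      d * C (j+1) -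
      (d * (∑ i ∈ Finset.Icc 1 ((j+1+1)/2 - 1), C (j+1-2*i)) -
        (∑ i ∈ Finset.Icc 1 ((j+1+1)/2 - 1), (i:ℤ) * Lp (j+1-2*i))) := by
  have hK5 : (j+5+1)/2 - 1 = ((j+3+1)/2 - 1) + 1 := by omega
  have hK3 : (j+3+1)/2 - 1 = ((j+1+1)/2 - 1) + 1 := by omega
  set K3 := (j+3+1)/2 - 1 with hK3def
  set K1 := (j+1+1)/2 - 1 with hK1def
  -- peel level 5 sums
  have hS5 : ∑ i ∈ Finset.Icc 1 ((j+5+1)/2 - 1), C (j+5-2*i) =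
      C (j+3) + ∑ i ∈ Finset.Icc 1 K3, C (j+3-2*i) := by
    rw [hK5, sum_Icc_shift _ _ (by omega), show K3 + 1 - 1 = K3 from by omega,
      show j+5-2*1 = j+3 from by omega]
    congr 1
    refine Finset.sum_congr rfl fun i hi => ?_
    rw [show j+5-2*(i+1) = j+3-2*i from by omega]
  have hL5 : ∑ i ∈ Finset.Icc 1 ((j+5+1)/2 - 1), (i:ℤ) * Lp (j+5-2*i) =
      Lp (j+3) + ((∑ i ∈ Finset.Icc 1 K3, (i:ℤ) * Lp (j+3-2*i)) +
        ∑ i ∈ Finset.Icc 1 K3, Lp (j+3-2*i)) := by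
    rw [hK5, sum_Icc_shift _ _ (by omega), show K3 + 1 - 1 = K3 from by omega,
      show j+5-2*1 = j+3 from by omega]
    have hc : ∀ i ∈ Finset.Icc 1 K3, (((i+1 : ℕ)):ℤ) * Lp (j+5-2*(i+1)) =
        (i:ℤ) * Lp (j+3-2*i) + Lp (j+3-2*i) := by
      intro i hi
      rw [show j+5-2*(i+1) = j+3-2*i from by omega]
      push_cast
      ring
    rw [Finset.sum_congr rfl hc, Finset.sum_add_distrib]
    push_cast
    ring
  -- peel level 3 sums
  have hS3 : ∑ i ∈ Finset.Icc 1 K3, C (j+3-2*i) =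
      C (j+1) + ∑ i ∈ Finset.Icc 1 K1, C (j+1-2*i) := by
    rw [hK3, sum_Icc_shift _ _ (by omega), show K1 + 1 - 1 = K1 from by omega,
      show j+3-2*1 = j+1 from by omega]
    congr 1
    refine Finset.sum_congr rfl fun i hi => ?_
    rw [show j+3-2*(i+1) = j+1-2*i from by omega]
  have hL3 : ∑ i ∈ Finset.Icc 1 K3, (i:ℤ) * Lp (j+3-2*i) =
      Lp (j+1) + ((∑ i ∈ Finset.Icc 1 K1, (i:ℤ) * Lp (j+1-2*i)) +
        ∑ i ∈ Finset.Icc 1 K1, Lp (j+1-2*i)) := by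
    rw [hK3, sum_Icc_shift _ _ (by omega), show K1 + 1 - 1 = K1 from by omega,
      show j+3-2*1 = j+1 from by omega]
    have hc : ∀ i ∈ Finset.Icc 1 K1, (((i+1 : ℕ)):ℤ) * Lp (j+3-2*(i+1)) =
        (i:ℤ) * Lp (j+1-2*i) + Lp (j+1-2*i) := by
      intro i hi
      rw [show j+3-2*(i+1) = j+1-2*i from by omega]
      push_cast
      ring
    rw [Finset.sum_congr rfl hc, Finset.sum_add_distrib]
    push_cast
    ring
  have hG3 : ∑ i ∈ Finset.Icc 1 K3, Lp (j+3-2*i) =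
      Lp (j+1) + ∑ i ∈ Finset.Icc 1 K1, Lp (j+1-2*i) := by
    rw [hK3, sum_Icc_shift _ _ (by omega), show K1 + 1 - 1 = K1 from by omega,
      show j+3-2*1 = j+1 from by omega]
    congr 1
    refine Finset.sum_congr rfl fun i hi => ?_
    rw [show j+3-2*(i+1) = j+1-2*i from by omega]
  rw [hS5, hL5, hS3, hL3, hG3]
  ring

lemma T_zero (x : X.V) : X.T 0 x = 0 := by
  rw [SerreGraph.T, Nat.card_eq_zero]
  left
  refine ⟨fun p => ?_⟩
  obtain ⟨h, _⟩ := p.2.2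
  omega

-- ## main induction

lemma T_formula (hfin : ∀ x : X.V, (X.edgesAt x).Finite) (x : X.V) : ∀ m : ℕ,
    (X.T m x : ℤ) =
      ((X.deg x : ℤ) - 2) * (∑ i ∈ Finset.Icc 1 ((m+1)/2 - 1), (X.c (m - 2*i) x : ℤ)) -
        ∑ i ∈ Finset.Icc 1 ((m+1)/2 - 1), (i : ℤ) * X.lap (fun v => (X.c (m - 2*i) v : ℤ)) x := by
  intro m
  induction m using Nat.strong_induction_on with
  | _ m ih =>
    rcases Nat.lt_or_ge m 5 with hm5 | hm5
    · interval_cases m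
      · norm_num [T_zero]
      · norm_num [T_one]
      · norm_num [T_two]
      · -- m = 3
        have t := Tstep hfin x 1 (by omega)
        have hb : (Nat.card {z : ↥(X.edgesAt x) × (Fin 1 → X.E) //
            X.IsGeodesicLoopAt (X.t z.1.1) z.2 ∧ z.2 ⟨0, by omega⟩ = X.bar z.1.1 ∧
              z.2 ⟨1-1, by omega⟩ = z.1.1} : ℤ) = 0 := by
          rw [E6zero1 x]; rfl
        rw [hb] at t
        have hcnt := c_eq_N_add_T hfin 1 x
        rw [T_one x] at hcnt
        have hlap := lap_sum hfin x 1
        rw [show Finset.Icc 1 ((3+1)/2 - 1) = {1} from rfl, Finset.sum_singleton,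
          Finset.sum_singleton, show 3 - 2*1 = 1 from rfl]
        have ht3 : (X.T 3 x : ℤ) = (X.T (1+2) x : ℤ) := rfl
        rw [ht3, t, hlap]
        have hc1 : (X.c 1 x : ℤ) = (X.N 1 x : ℤ) := by exact_mod_cast hcnt
        rw [hc1]
        push_cast
        ring
      · -- m = 4
        have t := Tstep hfin x 2 (by omega)
        have hb : (Nat.card {z : ↥(X.edgesAt x) × (Fin 2 → X.E) //
            X.IsGeodesicLoopAt (X.t z.1.1) z.2 ∧ z.2 ⟨0, by omega⟩ = X.bar z.1.1 ∧
              z.2 ⟨2-1, by omega⟩ = z.1.1} : ℤ) = 0 := by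
          rw [E6zero2 x]; rfl
        rw [hb] at t
        have hcnt := c_eq_N_add_T hfin 2 x
        rw [T_two x] at hcnt
        have hlap := lap_sum hfin x 2
        rw [show Finset.Icc 1 ((4+1)/2 - 1) = {1} from rfl, Finset.sum_singleton,
          Finset.sum_singleton, show 4 - 2*1 = 2 from rfl]
        have ht4 : (X.T 4 x : ℤ) = (X.T (2+2) x : ℤ) := rfl
        rw [ht4, t, hlap]
        have hc2 : (X.c 2 x : ℤ) = (X.N 2 x : ℤ) := by exact_mod_cast hcnt
        rw [hc2]
        push_cast
        ring
    · obtain ⟨j, rfl⟩ : ∃ j, m = j + 5 := ⟨m - 5, by omega⟩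
      have t := Tstep hfin x (j+3) (by omega)
      have hb : (Nat.card {z : ↥(X.edgesAt x) × (Fin (j+3) → X.E) //
          X.IsGeodesicLoopAt (X.t z.1.1) z.2 ∧ z.2 ⟨0, by omega⟩ = X.bar z.1.1 ∧
            z.2 ⟨j+3-1, by omega⟩ = z.1.1} : ℤ) =
          ((X.deg x : ℤ) - 2) * (X.c (j+1) x : ℤ) + (X.T (j+1) x : ℤ) := by
        rw [E6card x j]
        exact Dcard hfin x j
      rw [hb] at t
      have hcnt := c_eq_N_add_T hfin (j+3) x
      have hlap := lap_sum hfin x (j+3)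
      have ih3 := ih (j+3) (by omega)
      have ih1 := ih (j+1) (by omega)
      have alg := Falg (fun n => (X.c n x : ℤ))
        (fun n => X.lap (fun v => (X.c n v : ℤ)) x) ((X.deg x : ℤ) - 2) j
      rw [alg, ← ih3, ← ih1]
      have ht5 : (X.T (j+5) x : ℤ) = (X.T (j+3+2) x : ℤ) := rfl
      rw [ht5, t, hlap]
      have hcast : (X.c (j+3) x : ℤ) = (X.N (j+3) x : ℤ) + (X.T (j+3) x : ℤ) := by
        exact_mod_cast congrArg (Nat.cast : ℕ → ℤ) hcnt
      linarith

/-- For `m > 2`: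
`N_m(x₀) = c_m(x₀) − (deg(x₀)−2)·Σ_{i=1}^{⌈m/2⌉−1} c_{m−2i}(x₀)
  + Σ_{i=1}^{⌈m/2⌉−1} i·(Δ_X c_{m−2i})(x₀)`.
In `ℕ` the ceiling `⌈m/2⌉` is `(m+1)/2`. -/
theorem N_formula (X : SerreGraph) [Countable X.V]
    (hconn : X.Connected)
    (hfin : ∀ x : X.V, (X.edgesAt x).Finite)
    (hbd : ∃ M : ℕ, ∀ x : X.V, X.deg x ≤ M)
    (hdeg1 : ∀ x : X.V, X.deg x ≠ 1)
    (x₀ : X.V) (m : ℕ) (hm : 2 < m) :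
    (X.N m x₀ : ℤ) =
      (X.c m x₀ : ℤ)
        - ((X.deg x₀ : ℤ) - 2) *
            ∑ i ∈ Finset.Icc 1 ((m + 1) / 2 - 1), (X.c (m - 2 * i) x₀ : ℤ)
        + ∑ i ∈ Finset.Icc 1 ((m + 1) / 2 - 1),
            (i : ℤ) * X.lap (fun x => (X.c (m - 2 * i) x : ℤ)) x₀ := by
  have hT := T_formula hfin x₀ m
  have hcnt := c_eq_N_add_T hfin m x₀
  have hc : (X.c m x₀ : ℤ) = (X.N m x₀ : ℤ) + (X.T m x₀ : ℤ) := by exact_mod_cast hcnt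
  linarith
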